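/- Let x = (x_1, …, x_n), y = (y_1, …, y_n) ∈ ℝ^n with x_i ≠ 0 for all i = 1, …, n. If x and y are linearly independent, then there exists a singular positive semi-definite real symmetric matrix A of rank n − 1 such that the Hadamard product A ∘ (x xᵗ + y yᵗ) is positive definite. -/

import Mathlib

open Matrix Finset

private lemma expand_sq {n : ℕ} (a : Fin n → ℝ) (c : ℝ) :
    ∑ i, (a i - c)^2 = (∑ i, a i * a i) - 2*c*(∑ i, a i) + n * c^2 := by
  rw [Finset.sum_congr rfl (fun i _ => by ring :
    ∀ i ∈ Finset.univ, (a i - c)^2 = a i * a i - 2*c* a i + c^2)]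
  rw [Finset.sum_add_distrib, Finset.sum_sub_distrib, ← Finset.mul_sum, Finset.sum_const]
  simp [mul_comm]

private lemma row_sum {n : ℕ} (a : Fin n → ℝ) (i : Fin n) :
    ∑ j, ((if i = j then (1:ℝ) else 0) - (n:ℝ)⁻¹) * a j
      = a i - (n:ℝ)⁻¹ * ∑ j, a j := by
  have : ∀ j ∈ Finset.univ, ((if i = j then (1:ℝ) else 0) - (n:ℝ)⁻¹) * a j
      = (if i = j then a j else 0) - (n:ℝ)⁻¹ * a j := by
    intro j _
    by_cases h : i = j
    · simp [h]; ring
    · simp [h]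
  rw [Finset.sum_congr rfl this, Finset.sum_sub_distrib, Finset.sum_ite_eq, ← Finset.mul_sum]
  simp

private lemma quad_form {n : ℕ} (hn : (n:ℝ) ≠ 0) (a : Fin n → ℝ) :
    ∑ i, ∑ j, ((if i = j then (1:ℝ) else 0) - (n:ℝ)⁻¹) * (a i * a j)
      = ∑ i, (a i - (∑ j, a j) / n) ^ 2 := by
  rw [expand_sq]
  have key : ∀ i ∈ Finset.univ, ∑ j, ((if i = j then (1:ℝ) else 0) - (n:ℝ)⁻¹) * (a i * a j)
      = a i * a i - (n:ℝ)⁻¹ * (a i * ∑ j, a j) := by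
    intro i _
    calc ∑ j, ((if i = j then (1:ℝ) else 0) - (n:ℝ)⁻¹) * (a i * a j)
        = a i * a i - (n:ℝ)⁻¹ * ∑ j, a i * a j := row_sum (fun j => a i * a j) i
      _ = a i * a i - (n:ℝ)⁻¹ * (a i * ∑ j, a j) := by rw [← Finset.mul_sum]
  rw [Finset.sum_congr rfl key, Finset.sum_sub_distrib, ← Finset.mul_sum, ← Finset.sum_mul]
  field_simp
  ring

private lemma dot_form {n : ℕ} (M : Matrix (Fin n) (Fin n) ℝ) (u : Fin n → ℝ) :
    u ⬝ᵥ M *ᵥ u = ∑ i, ∑ j, M i j * (u i * u j) := by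
  simp only [dotProduct, mulVec, Finset.mul_sum]
  exact Finset.sum_congr rfl fun i _ => Finset.sum_congr rfl fun j _ => by ring

theorem stmt5 (n : ℕ) (x y : Fin n → ℝ) (hx : ∀ i, x i ≠ 0)
    (hli : LinearIndependent ℝ ![x, y]) :
    ∃ A : Matrix (Fin n) (Fin n) ℝ,
      A.PosSemidef ∧ A.det = 0 ∧ A.rank = n - 1 ∧
      (A.hadamard (vecMulVec x x + vecMulVec y y)).PosDef := by
  have hn2 : 2 ≤ n := by
    have := hli.fintype_card_le_finrank
    simpa using this
  have hn0 : (n:ℝ) ≠ 0 := by positivity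
  -- not proportional
  have hnp : ∀ c : ℝ, y ≠ c • x := by
    intro c hc
    have h0 : c • x + (-1 : ℝ) • y = 0 := by rw [hc]; module
    have := (LinearIndependent.pair_iff.mp hli c (-1) h0).2
    norm_num at this
  set e : Fin n → Fin n → ℝ := fun i j => (if i = j then (1:ℝ) else 0) - (n:ℝ)⁻¹ with he
  set A : Matrix (Fin n) (Fin n) ℝ :=
    Matrix.of (fun i j => (x i)⁻¹ * (x j)⁻¹ * e i j) with hA
  have hAapp : ∀ i j, A i j = (x i)⁻¹ * (x j)⁻¹ * e i j := fun i j => rfl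
  have hherm : A.IsHermitian := by
    ext i j
    simp only [conjTranspose_apply, star_trivial, hAapp, he]
    by_cases h : i = j
    · subst h; ring
    · rw [if_neg (Ne.symm h), if_neg h]; ring
  -- quadratic form of A
  have hformA : ∀ u : Fin n → ℝ,
      u ⬝ᵥ A *ᵥ u = ∑ i, (u i * (x i)⁻¹ - (∑ j, u j * (x j)⁻¹) / n) ^ 2 := by
    intro u
    rw [dot_form, ← quad_form hn0 (fun i => u i * (x i)⁻¹)]
    exact Finset.sum_congr rfl fun i _ => Finset.sum_congr rfl fun j _ => by
      simp only [hAapp, he]; ring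
  have hpsd : A.PosSemidef := by
    refine posSemidef_iff_dotProduct_mulVec.mpr ⟨hherm, fun u => ?_⟩
    rw [star_trivial, hformA]
    positivity
  -- A *ᵥ x = 0
  have hAx : A *ᵥ x = 0 := by
    funext i
    simp only [mulVec, dotProduct, hAapp, Pi.zero_apply]
    have : ∀ j ∈ Finset.univ, (x i)⁻¹ * (x j)⁻¹ * e i j * x j = (x i)⁻¹ * e i j := by
      intro j _
      have h1 : (x i)⁻¹ * (x j)⁻¹ * e i j * x j = (x i)⁻¹ * e i j * ((x j)⁻¹ * x j) := by ring
      rw [h1, inv_mul_cancel₀ (hx j), mul_one]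
    rw [Finset.sum_congr rfl this, ← Finset.mul_sum]
    have : ∑ j, e i j = 0 := by
      have := row_sum (fun _ => (1:ℝ)) i
      simp only [he]
      simp only [mul_one] at this
      rw [this]
      simp [hn0]
    rw [this, mul_zero]
  have hxne : x ≠ 0 := by
    intro h
    exact hx ⟨0, by omega⟩ (by rw [h]; rfl)
  have hdet : A.det = 0 := Matrix.exists_mulVec_eq_zero_iff.mp ⟨x, hxne, hAx⟩
  -- kernel is span of x
  have hker : LinearMap.ker A.mulVecLin = Submodule.span ℝ {x} := by
    apply le_antisymm
    · intro u hu
      rw [LinearMap.mem_ker, Matrix.mulVecLin_apply] at hu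
      set v : Fin n → ℝ := fun j => u j * (x j)⁻¹ with hv
      have hvi : ∀ i, v i = (n:ℝ)⁻¹ * ∑ j, v j := by
        intro i
        have h1 : (A *ᵥ u) i = 0 := by rw [hu]; rfl
        have h2 : (A *ᵥ u) i = (x i)⁻¹ * (v i - (n:ℝ)⁻¹ * ∑ j, v j) := by
          simp only [mulVec, dotProduct, hAapp]
          rw [← row_sum v i, Finset.mul_sum]
          exact Finset.sum_congr rfl fun j _ => by simp only [hv]; ring
        rw [h2] at h1
        rcases mul_eq_zero.mp h1 with h | h
        · exact absurd (inv_eq_zero.mp h) (hx i)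
        · linarith
      rw [Submodule.mem_span_singleton]
      refine ⟨(n:ℝ)⁻¹ * ∑ j, v j, funext fun i => ?_⟩
      simp only [Pi.smul_apply, smul_eq_mul]
      have h2 : u i = v i * x i := by
        simp only [hv]
        field_simp [hx i]
      rw [h2, hvi i]
    · rw [Submodule.span_le, Set.singleton_subset_iff]
      rw [SetLike.mem_coe, LinearMap.mem_ker, Matrix.mulVecLin_apply]
      exact hAx
  have hrank : A.rank = n - 1 := by
    have h1 := LinearMap.finrank_range_add_finrank_ker A.mulVecLin
    rw [hker, finrank_span_singleton hxne] at h1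
    simp only [Module.finrank_pi, Module.finrank_self] at h1
    have : A.rank = Module.finrank ℝ (LinearMap.range A.mulVecLin) := rfl
    simp at h1
    omega
  refine ⟨A, hpsd, hdet, hrank, ?_⟩
  -- Hadamard product positive definite
  set S : Matrix (Fin n) (Fin n) ℝ := vecMulVec x x + vecMulVec y y with hS
  have hSapp : ∀ i j, S i j = x i * x j + y i * y j := by
    intro i j; simp [hS, vecMulVec_apply]
  refine posDef_iff_dotProduct_mulVec.mpr ?_
  constructor
  · -- hermitian
    ext i j
    simp only [conjTranspose_apply, star_trivial, hadamard_apply, hSapp, hAapp, he]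
    by_cases h : i = j
    · subst h; ring
    · simp [h, Ne.symm h]; ring
  · intro u hu
    rw [star_trivial]
    set w : Fin n → ℝ := fun i => u i * y i * (x i)⁻¹ with hw
    have hform : u ⬝ᵥ (A.hadamard S) *ᵥ u
        = (∑ i, (u i - (∑ j, u j) / n) ^ 2) + ∑ i, (w i - (∑ j, w j) / n) ^ 2 := by
      rw [dot_form, ← quad_form hn0 u, ← quad_form hn0 w, ← Finset.sum_add_distrib]
      refine Finset.sum_congr rfl fun i _ => ?_
      rw [← Finset.sum_add_distrib]
      refine Finset.sum_congr rfl fun j _ => ?_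
      simp only [hadamard_apply, hAapp, hSapp, hw, he]
      have hxi := hx i; have hxj := hx j
      field_simp
    rw [hform]
    rcases lt_or_eq_of_le (by positivity :
        (0:ℝ) ≤ (∑ i, (u i - (∑ j, u j) / n) ^ 2) + ∑ i, (w i - (∑ j, w j) / n) ^ 2) with h | h
    · exact h
    exfalso
    -- both sums vanish
    have h1 : ∑ i, (u i - (∑ j, u j) / n) ^ 2 = 0 ∧ ∑ i, (w i - (∑ j, w j) / n) ^ 2 = 0 := by
      constructor <;> nlinarith [Finset.sum_nonneg (fun i (_ : i ∈ Finset.univ) => sq_nonneg (u i - (∑ j, u j) / n)), Finset.sum_nonneg (fun i (_ : i ∈ Finset.univ) => sq_nonneg (w i - (∑ j, w j) / n))]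
    have hu' : ∀ i, u i = (∑ j, u j) / n := by
      intro i
      have := (Finset.sum_eq_zero_iff_of_nonneg (fun i _ => sq_nonneg _)).mp h1.1 i (Finset.mem_univ i)
      have := pow_eq_zero_iff (n := 2) (by norm_num) |>.mp this
      linarith
    have hw' : ∀ i, w i = (∑ j, w j) / n := by
      intro i
      have := (Finset.sum_eq_zero_iff_of_nonneg (fun i _ => sq_nonneg _)).mp h1.2 i (Finset.mem_univ i)
      have := pow_eq_zero_iff (n := 2) (by norm_num) |>.mp this
      linarith
    set cu : ℝ := (∑ j, u j) / n with hcu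
    set cw : ℝ := (∑ j, w j) / n with hcw
    have hcune : cu ≠ 0 := by
      intro h0
      apply hu
      funext i
      rw [hu' i, h0]; rfl
    apply hnp (cw / cu)
    funext i
    have h2 : w i = cw := hw' i
    have h3 : u i = cu := hu' i
    simp only [hw, h3] at h2
    have hxi := hx i
    simp only [Pi.smul_apply, smul_eq_mul]
    field_simp at h2 ⊢
    nlinarith [h2]
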